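/- arXiv:1801.00616 — 2 statements merged into one kernel-verified Lean document; each statement's English description precedes it below -/
import Mathlib

section
/- Let β be a mixed base and define ord_β(n) = max{L : β̂_L divides n} for n ≠ 0 (and ord_β(0) = ∞). For m heap sizes, the set C_β of nonzero tuples C = (c^0,...,c^{m-1}) ∈ ℕ^m with ord_β(Σ_i c^i) = min_i ord_β(c^i) satisfies: for every C ∈ C_β and every X ∈ ℕ^m with X - C ∈ ℕ^m (componentwise), σ_β(X - C) ≠ σ_β(X), where σ_β(X) = x^0 ⊕ ... ⊕ x^{m-1} is the digit-wise Nim sum in base β. -/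
open scoped BigOperators

/-- β̂_L = β_0 ⋯ β_{L-1}, the place value of digit L in mixed base β. -/
def bhat (β : ℕ → ℕ) (L : ℕ) : ℕ := ∏ i ∈ Finset.range L, β i

/-- The L-th digit of n in the mixed base β. -/
def mdigit (β : ℕ → ℕ) (n L : ℕ) : ℕ := n / bhat β L % β L

/-- Digit-wise addition modulo β_L in mixed base β. -/
def moplus (β : ℕ → ℕ) (n h : ℕ) : ℕ :=
  ∑ L ∈ Finset.range (n + h + 1), ((mdigit β n L + mdigit β h L) % β L) * bhat β L

/-- Digit-wise subtraction modulo β_L in mixed base β. -/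
def mominus (β : ℕ → ℕ) (n h : ℕ) : ℕ :=
  ∑ L ∈ Finset.range (n + h + 1), ((β L + mdigit β n L - mdigit β h L) % β L) * bhat β L

/-- σ_β(X) = x^0 ⊕ ⋯ ⊕ x^{m-1}: the digit-wise Nim sum in mixed base β. -/
def msigma (β : ℕ → ℕ) {m : ℕ} (X : Fin m → ℕ) : ℕ :=
  ∑ L ∈ Finset.range (∑ i, X i + 1), ((∑ i, mdigit β (X i) L) % β L) * bhat β L

/-- Hamming weight: number of nonzero components. -/
def hamwt {m : ℕ} (C : Fin m → ℕ) : ℕ := (Finset.univ.filter (fun i => C i ≠ 0)).card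

/-- ord_β(n): the largest L with β̂_L ∣ n (⊤ for n = 0). -/
def mord (β : ℕ → ℕ) (n : ℕ) : ℕ∞ :=
  if n = 0 then ⊤ else (Nat.findGreatest (fun L => bhat β L ∣ n) n : ℕ∞)

/-- 𝒞 is a Sprague-Grundy system of σ_β: its members are nonzero moves and
σ_β satisfies the mex recursion of the take-away game Γ(ℕ^m, 𝒞), i.e. σ_β is the
Sprague-Grundy function of that game. -/
def IsSGSystem (β : ℕ → ℕ) {m : ℕ} (𝒞 : Set (Fin m → ℕ)) : Prop :=
  (∀ C ∈ 𝒞, C ≠ 0) ∧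
  ∀ X : Fin m → ℕ, msigma β X =
    sInf {n : ℕ | ∀ C ∈ 𝒞, (∀ i, C i ≤ X i) → msigma β (fun i => X i - C i) ≠ n}

lemma bhat_pos (β : ℕ → ℕ) (hβ : ∀ L, 2 ≤ β L) (K : ℕ) : 0 < bhat β K :=
  Finset.prod_pos fun i _ => lt_of_lt_of_le two_pos (hβ i)

lemma bhat_succ (β : ℕ → ℕ) (K : ℕ) : bhat β (K + 1) = bhat β K * β K :=
  Finset.prod_range_succ _ _

lemma lt_bhat (β : ℕ → ℕ) (hβ : ∀ L, 2 ≤ β L) (K : ℕ) : K < bhat β K := by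
  induction K with
  | zero => simp [bhat]
  | succ n ih =>
    rw [bhat_succ]
    have h2 : bhat β n * 2 ≤ bhat β n * β n := Nat.mul_le_mul_left _ (hβ n)
    omega

lemma bhat_dvd_bhat (β : ℕ → ℕ) {K L : ℕ} (h : K ≤ L) : bhat β K ∣ bhat β L :=
  Finset.prod_dvd_prod_of_subset _ _ _ (Finset.range_subset_range.mpr h)

lemma sum_digits_lt (β : ℕ → ℕ) (s : ℕ → ℕ)
    (hs : ∀ L, s L < β L) (M : ℕ) :
    ∑ L ∈ Finset.range M, s L * bhat β L < bhat β M := by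
  induction M with
  | zero => simp [bhat]
  | succ n ih =>
    rw [Finset.sum_range_succ, bhat_succ]
    calc ∑ L ∈ Finset.range n, s L * bhat β L + s n * bhat β n
        < bhat β n + s n * bhat β n := by omega
      _ = (1 + s n) * bhat β n := by ring
      _ ≤ β n * bhat β n := Nat.mul_le_mul_right _ (by have := hs n; omega)
      _ = bhat β n * β n := Nat.mul_comm _ _

lemma mdigit_sum (β : ℕ → ℕ) (hβ : ∀ L, 2 ≤ β L) (s : ℕ → ℕ)
    (hs : ∀ L, s L < β L) (M K : ℕ) :
    mdigit β (∑ L ∈ Finset.range M, s L * bhat β L) K = if K < M then s K else 0 := by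
  split
  · rename_i hKM
    -- split range M into range K, {K}, Ico (K+1) M
    have hsplit : ∑ L ∈ Finset.range M, s L * bhat β L
        = (∑ L ∈ Finset.range K, s L * bhat β L) + s K * bhat β K
          + ∑ L ∈ Finset.Ico (K + 1) M, s L * bhat β L := by
      rw [Finset.range_eq_Ico, ← Finset.sum_Ico_consecutive _ (Nat.zero_le (K + 1)) hKM,
        ← Finset.range_eq_Ico, Finset.sum_range_succ]
    -- the high part is divisible by bhat (K+1)
    obtain ⟨t, ht⟩ : bhat β (K + 1) ∣ ∑ L ∈ Finset.Ico (K + 1) M, s L * bhat β L :=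
      Finset.dvd_sum fun L hL =>
        Dvd.dvd.mul_left (bhat_dvd_bhat β (Finset.mem_Ico.mp hL).1) _
    have hA : ∑ L ∈ Finset.range K, s L * bhat β L < bhat β K :=
      sum_digits_lt β s hs K
    rw [hsplit, ht, bhat_succ, mdigit]
    have hb : 0 < bhat β K := bhat_pos β hβ K
    have : (∑ L ∈ Finset.range K, s L * bhat β L) + s K * bhat β K + bhat β K * β K * t
        = (∑ L ∈ Finset.range K, s L * bhat β L) + bhat β K * (s K + β K * t) := by ring
    rw [this, Nat.add_mul_div_left _ _ hb, Nat.div_eq_of_lt hA, Nat.zero_add,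
      Nat.add_mul_mod_self_left, Nat.mod_eq_of_lt (hs K)]
  · rename_i hKM
    push_neg at hKM
    have hlt : ∑ L ∈ Finset.range M, s L * bhat β L < bhat β K :=
      lt_of_lt_of_le (sum_digits_lt β s hs M) (Nat.le_of_dvd (bhat_pos β hβ K)
        (bhat_dvd_bhat β hKM))
    rw [mdigit, Nat.div_eq_of_lt hlt, Nat.zero_mod]

/-- The K-th digit of the Nim sum is the mod-β_K sum of the K-th digits. -/
lemma mdigit_msigma (β : ℕ → ℕ) (hβ : ∀ L, 2 ≤ β L) {m : ℕ} (X : Fin m → ℕ) (K : ℕ) :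
    mdigit β (msigma β X) K = (∑ i, mdigit β (X i) K) % β K := by
  have hβK : 0 < β K := by have := hβ K; omega
  have hs : ∀ L, (∑ i, mdigit β (X i) L) % β L < β L := fun L =>
    Nat.mod_lt _ (by have := hβ L; omega)
  rw [msigma, mdigit_sum β hβ _ hs]
  split
  · rfl
  · rename_i h
    push_neg at h
    have : ∀ i, mdigit β (X i) K = 0 := by
      intro i
      have hXi : X i < bhat β K := by
        have h1 : X i ≤ ∑ j, X j := Finset.single_le_sum (fun j _ => Nat.zero_le _)
          (Finset.mem_univ i)
        have h2 : (K : ℕ) < bhat β K := lt_bhat β hβ K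
        omega
      rw [mdigit, Nat.div_eq_of_lt hXi, Nat.zero_mod]
    rw [Finset.sum_congr rfl fun i _ => this i, Finset.sum_const_zero, Nat.zero_mod]

/-- Moves in 𝒞_β change the Nim sum σ_β. -/
theorem stmt2 (β : ℕ → ℕ) (hβ : ∀ L, 2 ≤ β L) {m : ℕ} (C X : Fin m → ℕ)
    (hC0 : C ≠ 0) (hord : mord β (∑ i, C i) = ⨅ i, mord β (C i))
    (hle : ∀ i, C i ≤ X i) :
    msigma β (fun i => X i - C i) ≠ msigma β X := by
  -- S = ∑ C i ≠ 0
  set S := ∑ i, C i with hS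
  obtain ⟨i₀, hi₀⟩ : ∃ i, C i ≠ 0 := by
    by_contra h
    push_neg at h
    exact hC0 (funext h)
  have hS0 : S ≠ 0 := by
    have : C i₀ ≤ S := Finset.single_le_sum (fun j _ => Nat.zero_le _) (Finset.mem_univ i₀)
    omega
  set K := Nat.findGreatest (fun L => bhat β L ∣ S) S with hK
  have hmordS : mord β S = (K : ℕ∞) := by rw [mord, if_neg hS0]
  -- bhat K divides S
  have hdvdS : bhat β K ∣ S :=
    Nat.findGreatest_spec (P := fun L => bhat β L ∣ S) (Nat.zero_le _) (by simp [bhat])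
  -- bhat (K+1) does not divide S
  have hndvd : ¬ bhat β (K + 1) ∣ S := by
    intro hd
    have h1 : bhat β (K + 1) ≤ S := Nat.le_of_dvd (Nat.pos_of_ne_zero hS0) hd
    have h2 : K + 1 < bhat β (K + 1) := lt_bhat β hβ (K + 1)
    have h3 : K + 1 ≤ Nat.findGreatest (fun L => bhat β L ∣ S) S :=
      Nat.le_findGreatest (by omega) hd
    omega
  -- bhat K divides each C i
  have hdvdC : ∀ i, bhat β K ∣ C i := by
    intro i
    by_cases hCi : C i = 0
    · simp [hCi]
    · have h1 : mord β S ≤ mord β (C i) := hord ▸ iInf_le _ i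
      rw [hmordS, mord, if_neg hCi, Nat.cast_le] at h1
      exact dvd_trans (bhat_dvd_bhat β h1)
        (Nat.findGreatest_spec (P := fun L => bhat β L ∣ C i) (Nat.zero_le _)
          (by simp [bhat]))
  have hbK : 0 < bhat β K := bhat_pos β hβ K
  intro heq
  -- compare K-th digits
  have hdig := congrArg (fun n => mdigit β n K) heq
  simp only [mdigit_msigma β hβ] at hdig
  -- rewrite digits of X i - C i at place K
  set a : Fin m → ℕ := fun i => X i / bhat β K with ha
  set d : Fin m → ℕ := fun i => C i / bhat β K with hd
  have hda : ∀ i, d i ≤ a i := fun i => Nat.div_le_div_right (hle i)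
  have hsub : ∀ i, (X i - C i) / bhat β K = a i - d i := by
    intro i
    obtain ⟨k, hk⟩ := hdvdC i
    have hCk : C i = bhat β K * k := hk
    rw [hCk, Nat.sub_mul_div _ _ _]
    simp [ha, hd, hCk, Nat.mul_div_cancel_left _ hbK]
  have hdigX : ∀ i, mdigit β (X i) K = a i % β K := fun i => rfl
  have hdigXC : ∀ i, mdigit β (X i - C i) K = (a i - d i) % β K := by
    intro i; rw [mdigit, hsub i]
  simp only [hdigXC, hdigX] at hdig
  -- reduce mods: (∑ (a-d)) % β K = (∑ a) % β K
  have hmod : (∑ i, (a i - d i)) % β K = (∑ i, a i) % β K := by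
    have h1 : (∑ i, (a i - d i) % β K) % β K = (∑ i, (a i - d i)) % β K :=
      Finset.sum_nat_mod _ _ _ ▸ rfl
    have h2 : (∑ i, a i % β K) % β K = (∑ i, a i) % β K :=
      Finset.sum_nat_mod _ _ _ ▸ rfl
    omega
  have hsum : ∑ i, (a i - d i) = ∑ i, a i - ∑ i, d i := by
    rw [eq_tsub_iff_add_eq_of_le (Finset.sum_le_sum fun i _ => hda i),
      ← Finset.sum_add_distrib]
    exact Finset.sum_congr rfl fun i _ => by have := hda i; omega
  have hdle : ∑ i, d i ≤ ∑ i, a i := Finset.sum_le_sum fun i _ => hda i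
  -- deduce β K ∣ ∑ d
  have hdvdd : β K ∣ ∑ i, d i := by
    rw [hsum] at hmod
    have h3 : β K ∣ ∑ i, a i - (∑ i, a i - ∑ i, d i) :=
      (Nat.modEq_iff_dvd' (Nat.sub_le _ _)).mp hmod
    have h4 : ∑ i, a i - (∑ i, a i - ∑ i, d i) = ∑ i, d i := by omega
    rwa [h4] at h3
  -- but then bhat (K+1) ∣ S, contradiction
  apply hndvd
  have hSd : S = bhat β K * ∑ i, d i := by
    rw [hS, Finset.mul_sum]
    exact Finset.sum_congr rfl fun i _ => (Nat.mul_div_cancel' (hdvdC i)).symm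
  obtain ⟨t, ht⟩ := hdvdd
  rw [hSd, ht, bhat_succ]
  exact ⟨t, by ring⟩
end

section
/- Let β be a mixed base and m ≥ 0, and let ℱ^β = {F ∈ ℕ^m : ∃ X ∈ ℕ^m, σ_β(X + F) = σ_β(X)}. Conversely, if σ_β(F) has 0-th digit 0 and F̂ + r ∈ ℱ^{β̂} for some r ∈ ρ(F), then F ∈ ℱ^β. -/
open scoped BigOperators

lemma two_pow_le_bhat (β : ℕ → ℕ) (hβ : ∀ L, 2 ≤ β L) (L : ℕ) : 2 ^ L ≤ bhat β L := by
  induction L with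
  | zero => simp [bhat]
  | succ n ih =>
    rw [bhat, Finset.prod_range_succ, pow_succ]
    exact Nat.mul_le_mul ih (hβ n)

lemma mdigit_eq_zero (β : ℕ → ℕ) (hβ : ∀ L, 2 ≤ β L) {n L : ℕ} (h : n < 2 ^ L) :
    mdigit β n L = 0 := by
  have : n < bhat β L := lt_of_lt_of_le h (two_pow_le_bhat β hβ L)
  simp [mdigit, Nat.div_eq_of_lt this]

lemma msigma_eq (β : ℕ → ℕ) (hβ : ∀ L, 2 ≤ β L) {m : ℕ} (X : Fin m → ℕ) {N : ℕ}
    (hN : ∑ i, X i + 1 ≤ N) :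
    msigma β X = ∑ L ∈ Finset.range N, ((∑ i, mdigit β (X i) L) % β L) * bhat β L := by
  unfold msigma
  refine Finset.sum_subset (Finset.range_subset_range.mpr hN) ?_
  intro L hL hL'
  simp only [Finset.mem_range, not_lt] at hL'
  have : ∀ i, mdigit β (X i) L = 0 := by
    intro i
    apply mdigit_eq_zero β hβ
    calc X i ≤ ∑ j, X j := Finset.single_le_sum (fun j _ => Nat.zero_le _) (Finset.mem_univ i)
    _ < L := by omega
    _ < 2 ^ L := Nat.lt_two_pow_self
  simp [this]

lemma mdigit_succ (β : ℕ → ℕ) (n L : ℕ) :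
    mdigit β n (L + 1) = mdigit (fun K => β (K + 1)) (n / β 0) L := by
  unfold mdigit bhat
  rw [Nat.div_div_eq_div_mul]
  congr 2
  rw [Finset.prod_range_succ']
  ring

lemma msigma_decomp (β : ℕ → ℕ) (hβ : ∀ L, 2 ≤ β L) {m : ℕ} (X : Fin m → ℕ) :
    msigma β X = (∑ i, X i % β 0) % β 0 +
      β 0 * msigma (fun L => β (L + 1)) (fun i => X i / β 0) := by
  set N := ∑ i, X i + 1 with hNdef
  have hβ' : ∀ L, 2 ≤ (fun K => β (K + 1)) L := fun L => hβ (L + 1)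
  have h1 : msigma β X = ∑ L ∈ Finset.range (N + 1),
      ((∑ i, mdigit β (X i) L) % β L) * bhat β L := msigma_eq β hβ X (by omega)
  have h2 : msigma (fun L => β (L + 1)) (fun i => X i / β 0) =
      ∑ L ∈ Finset.range N,
        ((∑ i, mdigit (fun K => β (K + 1)) (X i / β 0) L) % β (L + 1)) *
          bhat (fun K => β (K + 1)) L := by
    apply msigma_eq _ hβ'
    have : ∑ i, X i / β 0 ≤ ∑ i, X i :=
      Finset.sum_le_sum fun i _ => Nat.div_le_self _ _
    omega
  rw [h1, Finset.sum_range_succ']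
  have h3 : ∀ L, ((∑ i, mdigit β (X i) (L + 1)) % β (L + 1)) * bhat β (L + 1) =
      β 0 * (((∑ i, mdigit (fun K => β (K + 1)) (X i / β 0) L) % β (L + 1)) *
        bhat (fun K => β (K + 1)) L) := by
    intro L
    have hb : bhat β (L + 1) = bhat (fun K => β (K + 1)) L * β 0 := by
      unfold bhat; rw [Finset.prod_range_succ']
    simp only [mdigit_succ, hb]
    ring
  simp only [h3]
  rw [← Finset.mul_sum, ← h2]
  have h0 : ((∑ i, mdigit β (X i) 0) % β 0) * bhat β 0 = (∑ i, X i % β 0) % β 0 := by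
    simp [mdigit, bhat]
  rw [h0]; ring

/-- Conversely: if the 0-th digit of σ_β(F) is 0 and F̂ + r ∈ ℱ^{β̂} for some
r ∈ ρ(F), then F ∈ ℱ^β. -/
theorem stmt11 (β : ℕ → ℕ) (hβ : ∀ L, 2 ≤ β L) {m : ℕ} (F : Fin m → ℕ)
    (h0 : mdigit β (msigma β F) 0 = 0)
    (hr : ∃ r : Fin m → ℕ, (∀ i, r i ≤ 1 ∧ r i ≤ F i % β 0) ∧
      ∃ Y : Fin m → ℕ,
        msigma (fun L => β (L + 1)) (fun i => Y i + (F i / β 0 + r i)) =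
          msigma (fun L => β (L + 1)) Y) :
    ∃ X : Fin m → ℕ, msigma β (fun i => X i + F i) = msigma β X := by
  obtain ⟨r, hrle, Y, hY⟩ := hr
  have hβ0 : 2 ≤ β 0 := hβ 0
  set x0 : Fin m → ℕ := fun i => if r i = 1 then β 0 - F i % β 0 else 0 with hx0
  set X : Fin m → ℕ := fun i => β 0 * Y i + x0 i with hX
  refine ⟨X, ?_⟩
  have hE : ∀ i, X i + F i = β 0 * (Y i + (F i / β 0 + r i)) + (x0 i + F i % β 0) % β 0 := by
    intro i
    obtain ⟨h1, h2⟩ := hrle i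
    have hf := Nat.div_add_mod (F i) (β 0)
    have hflt : F i % β 0 < β 0 := Nat.mod_lt _ (by omega)
    rcases (by omega : r i = 0 ∨ r i = 1) with h | h
    · have hx : x0 i = 0 := by simp [hx0, h]
      have hw : (x0 i + F i % β 0) % β 0 = F i % β 0 := by
        rw [hx, Nat.zero_add]; exact Nat.mod_mod_of_dvd _ dvd_rfl
      rw [hw, hX]
      simp only [hx, h, Nat.add_zero, Nat.mul_add]
      omega
    · have hx : x0 i = β 0 - F i % β 0 := by simp [hx0, h]
      have hw : (x0 i + F i % β 0) % β 0 = 0 := by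
        rw [hx]
        have h3 : β 0 - F i % β 0 + F i % β 0 = β 0 := by omega
        rw [h3, Nat.mod_self]
      rw [hw, hX]
      simp only [hx, h, Nat.add_zero, Nat.mul_add, Nat.mul_one]
      omega
  have hwlt : ∀ i, (x0 i + F i % β 0) % β 0 < β 0 := fun i => Nat.mod_lt _ (by omega)
  have hmod : ∀ i, (X i + F i) % β 0 = (x0 i + F i % β 0) % β 0 := by
    intro i; rw [hE i, Nat.mul_add_mod]
    exact Nat.mod_mod_of_dvd _ dvd_rfl
  have hdiv : ∀ i, (X i + F i) / β 0 = Y i + (F i / β 0 + r i) := by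
    intro i; rw [hE i, Nat.mul_add_div (by omega), Nat.div_eq_of_lt (hwlt i)]; omega
  have hx0lt : ∀ i, x0 i < β 0 := by
    intro i
    obtain ⟨h1, h2⟩ := hrle i
    have hflt : F i % β 0 < β 0 := Nat.mod_lt _ (by omega)
    rcases (by omega : r i = 0 ∨ r i = 1) with h | h <;> simp [hx0, h] <;> omega
  have hXmod : ∀ i, X i % β 0 = x0 i := by
    intro i; rw [hX]; simp only []
    rw [Nat.mul_add_mod, Nat.mod_eq_of_lt (hx0lt i)]
  have hXdiv : ∀ i, X i / β 0 = Y i := by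
    intro i; rw [hX]; simp only []
    rw [Nat.mul_add_div (by omega), Nat.div_eq_of_lt (hx0lt i)]; omega
  have hF0 : (∑ i, F i % β 0) % β 0 = 0 := by
    have h := msigma_decomp β hβ F
    have hd : mdigit β (msigma β F) 0 = msigma β F % β 0 := by
      simp [mdigit, bhat]
    rw [hd, h, Nat.add_mul_mod_self_left] at h0
    rwa [Nat.mod_mod_of_dvd _ dvd_rfl] at h0
  rw [msigma_decomp β hβ, msigma_decomp β hβ X]
  simp only [hmod, hdiv, hXmod, hXdiv, hY]
  congr 1
  calc (∑ i, (x0 i + F i % β 0) % β 0) % β 0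
      = (∑ i, (x0 i + F i % β 0)) % β 0 := (Finset.sum_nat_mod _ _ _).symm
    _ = ((∑ i, x0 i) + ∑ i, F i % β 0) % β 0 := by rw [Finset.sum_add_distrib]
    _ = ((∑ i, x0 i) % β 0 + (∑ i, F i % β 0) % β 0) % β 0 := by rw [Nat.add_mod]
    _ = (∑ i, x0 i) % β 0 := by
        rw [hF0, Nat.add_zero]
        exact Nat.mod_mod_of_dvd _ dvd_rfl
end
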